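/- Over the Goguen structure, let U = {1, 2, 3}, let R be the fuzzy relation on U with matrix rows (0, 0.4, 1), (0.6, 0.6, 0.8), (0.8, 1, 1) (so R(1,1) = 0, R(1,2) = 0.4, etc.), and let X_0 be the fuzzy relation on U with matrix rows (1, 0.2, 0.06), (0.4, 1, 0.3), (0.24, 0.6, 1). Then X_0 is a fuzzy preorder, and the set of fuzzy preorders X on U satisfying X ≤ X_0 and 2/3 ≤ ((X ∘ R) ≈ (R ∘ X)) has no greatest element. In particular, it is not true that for every threshold x and every fuzzy preorder X_0 there exists a greatest fuzzy preorder X with X ≤ X_0 whose solution degree (X ∘ R) ≈ (R ∘ X) is at least x. -/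

import Mathlib

/-! The Goguen (product) structure on the real unit interval [0,1]:
⊗ is ordinary multiplication, the residuum is x → y = 1 if x ≤ y and y/x otherwise,
and the biresiduum is the minimum of the two residua. Fuzzy relations on U = Fin 3
are maps U → U → ℝ with values in [0,1], ordered pointwise. -/

/-- Goguen residuum. -/
noncomputable def gImp (x y : ℝ) : ℝ := if x ≤ y then 1 else y / x

/-- Goguen biresiduum. -/
noncomputable def gBimp (x y : ℝ) : ℝ := gImp x y ⊓ gImp y x

/-- Composition of fuzzy relations over the Goguen structure:
(R ∘ P)(u,v) = ⨆ w, R(u,w) · P(w,v). -/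
noncomputable def gComp (R P : Fin 3 → Fin 3 → ℝ) : Fin 3 → Fin 3 → ℝ :=
  fun u v => ⨆ w, R u w * P w v

/-- Equality degree of fuzzy relations: the infimum of the pointwise biresidua. -/
noncomputable def gEqd (R Q : Fin 3 → Fin 3 → ℝ) : ℝ := ⨅ u, ⨅ v, gBimp (R u v) (Q u v)

/-- All values lie in the unit interval [0,1]. -/
def In01 (R : Fin 3 → Fin 3 → ℝ) : Prop := ∀ u v, R u v ∈ Set.Icc (0 : ℝ) 1

/-- A fuzzy preorder: reflexive (P(u,u) = 1) and transitive (P ∘ P ≤ P). -/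
def IsGoguenPreorder (P : Fin 3 → Fin 3 → ℝ) : Prop :=
  (∀ u, P u u = 1) ∧ gComp P P ≤ P

/-- The set of fuzzy preorders X with X ≤ X₀ whose solution degree
(X ∘ R) ≈ (R ∘ X) is at least x. -/
noncomputable def solSet (R X0 : Fin 3 → Fin 3 → ℝ) (x : ℝ) : Set (Fin 3 → Fin 3 → ℝ) :=
  {X | In01 X ∧ IsGoguenPreorder X ∧ X ≤ X0 ∧ x ≤ gEqd (gComp X R) (gComp R X)}

/-- The fuzzy relation R of Proposition 1. -/
noncomputable def Rmat : Fin 3 → Fin 3 → ℝ :=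
  ![![0, 0.4, 1], ![0.6, 0.6, 0.8], ![0.8, 1, 1]]

/-- The fuzzy preorder X₀ of Proposition 1. -/
noncomputable def X0mat : Fin 3 → Fin 3 → ℝ :=
  ![![1, 0.2, 0.06], ![0.4, 1, 0.3], ![0.24, 0.6, 1]]

lemma sup3 (f : Fin 3 → ℝ) : (⨆ w, f w) = max (f 0) (max (f 1) (f 2)) := by
  apply le_antisymm
  · exact ciSup_le fun i => by fin_cases i <;> simp [le_max_iff, le_refl]
  · have h : BddAbove (Set.range f) := Set.Finite.bddAbove (Set.finite_range f)
    exact max_le (le_ciSup h 0) (max_le (le_ciSup h 1) (le_ciSup h 2))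

lemma lesup3 (f : Fin 3 → ℝ) (i : Fin 3) : f i ≤ ⨆ w, f w :=
  le_ciSup (Set.Finite.bddAbove (Set.finite_range f)) i

lemma inf3le (f : Fin 3 → ℝ) (i : Fin 3) : (⨅ w, f w) ≤ f i :=
  ciInf_le (Set.Finite.bddBelow (Set.finite_range f)) i

lemma gComp_apply (A B : Fin 3 → Fin 3 → ℝ) (u v : Fin 3) :
    gComp A B u v = max (A u 0 * B 0 v) (max (A u 1 * B 1 v) (A u 2 * B 2 v)) :=
  sup3 _

/-- First maximal solution. -/
noncomputable def Xa : Fin 3 → Fin 3 → ℝ :=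
  ![![1, 1/5, 3/50], ![6/25, 1, 3/10], ![18/125, 3/5, 1]]

/-- Second maximal solution. -/
noncomputable def Xb : Fin 3 → Fin 3 → ℝ :=
  ![![1, 1/5, 3/50], ![2/5, 1, 3/10], ![4/25, 9/25, 1]]

lemma eqd_ge (R Q : Fin 3 → Fin 3 → ℝ) (x : ℝ)
    (h : ∀ u v, x ≤ gBimp (R u v) (Q u v)) : x ≤ gEqd R Q :=
  le_ciInf fun u => le_ciInf fun v => h u v

lemma Xa_mem : Xa ∈ solSet Rmat X0mat (2 / 3) := by
  refine ⟨?_, ⟨?_, ?_⟩, ?_, ?_⟩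
  · intro u v; fin_cases u <;> fin_cases v <;> norm_num [Xa]
  · intro u; fin_cases u <;> norm_num [Xa]
  · intro u v
    rw [gComp_apply]
    fin_cases u <;> fin_cases v <;> norm_num [Xa, Matrix.cons_val_two]
  · intro u v; fin_cases u <;> fin_cases v <;> norm_num [Xa, X0mat]
  · refine eqd_ge _ _ _ fun u v => ?_
    rw [gComp_apply, gComp_apply]
    fin_cases u <;> fin_cases v <;> norm_num [Xa, Rmat, gBimp, gImp, Matrix.cons_val_two]

lemma Xb_mem : Xb ∈ solSet Rmat X0mat (2 / 3) := by
  refine ⟨?_, ⟨?_, ?_⟩, ?_, ?_⟩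
  · intro u v; fin_cases u <;> fin_cases v <;> norm_num [Xb]
  · intro u; fin_cases u <;> norm_num [Xb]
  · intro u v
    rw [gComp_apply]
    fin_cases u <;> fin_cases v <;> norm_num [Xb, Matrix.cons_val_two]
  · intro u v; fin_cases u <;> fin_cases v <;> norm_num [Xb, X0mat]
  · refine eqd_ge _ _ _ fun u v => ?_
    rw [gComp_apply, gComp_apply]
    fin_cases u <;> fin_cases v <;> norm_num [Xb, Rmat, gBimp, gImp, Matrix.cons_val_two]

lemma X0_facts : In01 X0mat ∧ IsGoguenPreorder X0mat := by
  refine ⟨?_, ?_, ?_⟩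
  · intro u v; fin_cases u <;> fin_cases v <;> norm_num [X0mat]
  · intro u; fin_cases u <;> norm_num [X0mat]
  · intro u v
    rw [gComp_apply]
    fin_cases u <;> fin_cases v <;> norm_num [X0mat, Matrix.cons_val_two]

lemma no_greatest :
    ¬ ∃ G ∈ solSet Rmat X0mat (2 / 3),
        ∀ X ∈ solSet Rmat X0mat (2 / 3), X ≤ G := by
  rintro ⟨G, ⟨hG01, ⟨hGrefl, hGtrans⟩, hGle, hGdeg⟩, hmax⟩
  have ha := hmax Xa Xa_mem
  have hb := hmax Xb Xb_mem
  have hG21 : (3/5 : ℝ) ≤ G 2 1 := by have := ha 2 1; rw [show Xa 2 1 = 3/5 by norm_num [Xa, Matrix.cons_val_two]] at this; exact this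
  have hG10 : (2/5 : ℝ) ≤ G 1 0 := by have := hb 1 0; rw [show Xb 1 0 = 2/5 by norm_num [Xb]] at this; exact this
  -- transitivity forces G 2 0 ≥ 6/25
  have hG20 : (6/25 : ℝ) ≤ G 2 0 := by
    have h1 : (6/25 : ℝ) ≤ G 2 1 * G 1 0 := by nlinarith
    have h2 : G 2 1 * G 1 0 ≤ gComp G G 2 0 := by
      rw [gComp_apply]; exact le_max_of_le_right (le_max_left _ _)
    exact h1.trans (h2.trans (hGtrans 2 0))
  -- (G ∘ R)(0,0) ≤ 3/25
  have hp : gComp G Rmat 0 0 ≤ 3/25 := by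
    rw [gComp_apply]
    have h01 : G 0 1 ≤ 1/5 := by have := hGle 0 1; rw [show X0mat 0 1 = 1/5 by norm_num [X0mat]] at this; exact this
    have h02 : G 0 2 ≤ 3/50 := by have := hGle 0 2; rw [show X0mat 0 2 = 3/50 by norm_num [X0mat, Matrix.cons_val_two]] at this; exact this
    have n1 := (hG01 0 1).1
    have n2 := (hG01 0 2).1
    rw [show Rmat 0 0 = 0 by norm_num [Rmat], show Rmat 1 0 = 3/5 by norm_num [Rmat],
        show Rmat 2 0 = 4/5 by norm_num [Rmat, Matrix.cons_val_two]]
    refine max_le (by norm_num) (max_le ?_ ?_) <;> nlinarith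
  -- (R ∘ G)(0,0) ≥ 6/25
  have hq : (6/25 : ℝ) ≤ gComp Rmat G 0 0 := by
    have h2 : Rmat 0 2 * G 2 0 ≤ gComp Rmat G 0 0 := by
      rw [gComp_apply]; exact le_max_of_le_right (le_max_right _ _)
    rw [show Rmat 0 2 = 1 by norm_num [Rmat, Matrix.cons_val_two], one_mul] at h2
    exact hG20.trans h2
  -- the degree at (0,0) is at most 1/2
  have hdeg00 : (2/3 : ℝ) ≤ gBimp (gComp G Rmat 0 0) (gComp Rmat G 0 0) := by
    refine hGdeg.trans (le_trans ?_ (inf3le (fun v => gBimp (gComp G Rmat 0 v) (gComp Rmat G 0 v)) 0))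
    exact inf3le (fun u => ⨅ v, gBimp (gComp G Rmat u v) (gComp Rmat G u v)) 0
  have hqp : ¬ gComp Rmat G 0 0 ≤ gComp G Rmat 0 0 := by intro h; linarith
  have hbd : gBimp (gComp G Rmat 0 0) (gComp Rmat G 0 0) ≤ 1/2 := by
    refine (inf_le_right).trans ?_
    rw [gImp, if_neg hqp]
    rw [div_le_iff₀ (by linarith : (0:ℝ) < gComp Rmat G 0 0)]
    nlinarith
  linarith

/-- X₀ is a fuzzy preorder, the set of fuzzy preorders X ≤ X₀ with solution degree
at least 2/3 has no greatest element, and in particular it is not true that for every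
threshold x ∈ [0,1] and every fuzzy preorder Y₀ there is a greatest fuzzy preorder
X ≤ Y₀ with solution degree at least x. -/
theorem stmt19 :
    (In01 X0mat ∧ IsGoguenPreorder X0mat) ∧
    (¬ ∃ G ∈ solSet Rmat X0mat (2 / 3),
        ∀ X ∈ solSet Rmat X0mat (2 / 3), X ≤ G) ∧
    (¬ ∀ x ∈ Set.Icc (0 : ℝ) 1, ∀ Y0 : Fin 3 → Fin 3 → ℝ,
        In01 Y0 → IsGoguenPreorder Y0 →
        ∃ G ∈ solSet Rmat Y0 x, ∀ X ∈ solSet Rmat Y0 x, X ≤ G) := by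
  refine ⟨X0_facts, no_greatest, fun h => no_greatest (h (2/3) (by norm_num) X0mat X0_facts.1 X0_facts.2)⟩
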